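/- Under the hypotheses of the previous contour formula, the trace of the operator on ℓ²({h, h+1, ...}) with matrix entries A(i,j) = ∑_{k=1}^∞ f_{i+k} g_{-k-j} equals -(1/4π²) ∮∮ f(z₁) g(z₂) z₁^{-h} z₂^{h} / (z₁ - z₂)² dz₁ dz₂, where |z₂| < |z₁|. -/

import Mathlib

open Complex MeasureTheory


/-- The basic circle integral: `∫₀^{2π} z^n · (I z) dθ` with `z = R e^{iθ}`. -/
lemma circInt (R : ℝ) (hR : 0 < R) (n : ℤ) :
    (∫ θ in (0:ℝ)..(2*Real.pi), ((R:ℂ) * Complex.exp (I*θ))^n * (I * ((R:ℂ) * Complex.exp (I*θ)))) =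
    if n = -1 then 2*Real.pi*I else 0 := by
  have hRc : (R:ℂ) ≠ 0 := by exact_mod_cast hR.ne'
  have key : ∀ θ : ℝ, ((R:ℂ) * Complex.exp (I*θ))^n * (I * ((R:ℂ) * Complex.exp (I*θ)))
      = I * (R:ℂ)^(n+1) * Complex.exp ((((n:ℂ)+1)*I) * θ) := by
    intro θ
    have he : Complex.exp (I*θ) ≠ 0 := Complex.exp_ne_zero _
    rw [mul_zpow, ← Complex.exp_int_mul, zpow_add₀ hRc]
    rw [show ((((n:ℂ)+1)*I) * θ) = (n:ℂ)*(I*θ) + I*θ by push_cast; ring, Complex.exp_add,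
      zpow_one]
    ring
  simp_rw [key]
  rw [intervalIntegral.integral_const_mul]
  by_cases hn : n = -1
  · subst hn
    norm_num
    ring
  · have hc : (((n:ℂ)+1)*I) ≠ 0 := by
      simp only [ne_eq, mul_eq_zero, I_ne_zero, or_false]
      intro hh
      apply hn
      have : (n:ℂ) = -1 := by linear_combination hh
      exact_mod_cast this
    rw [_root_.integral_exp_mul_complex hc]
    rw [if_neg hn]
    rw [show (((n:ℂ)+1)*I) * (2*Real.pi : ℝ) = ((n+1 : ℤ):ℂ) * (2*Real.pi*I) by push_cast; ring]
    rw [Complex.exp_int_mul_two_pi_mul_I]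
    norm_num


lemma geomDeriv {w : ℂ} (hw : ‖w‖ < 1) :
    HasSum (fun k : ℕ => ((k:ℂ)+1) * w^k) (((1-w)^2)⁻¹) := by
  have h1 : HasSum (fun k : ℕ => (k:ℂ) * w^k) (w / (1-w)^2) :=
    hasSum_coe_mul_geometric_of_norm_lt_one hw
  have h2 : HasSum (fun k : ℕ => w^k) ((1-w)⁻¹) := hasSum_geometric_of_norm_lt_one hw
  have hne : (1:ℂ) - w ≠ 0 := by
    intro hh
    rw [sub_eq_zero] at hh
    rw [← hh] at hw; simp at hw
  have h3 := h1.add h2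
  convert h3 using 1
  · funext k; ring
  · field_simp
    ring

lemma geomTwo {z₁ z₂ : ℂ} (hz₁ : z₁ ≠ 0) (hlt : ‖z₂‖ < ‖z₁‖) :
    HasSum (fun k : ℕ => ((k:ℂ)+1) * z₂^k * z₁^(-(k:ℤ)-2)) (((z₁-z₂)^2)⁻¹) := by
  have hw : ‖z₂/z₁‖ < 1 := by
    rw [norm_div, div_lt_one (norm_pos_iff.mpr hz₁)]
    exact hlt
  have h := (geomDeriv hw).mul_left ((z₁^2)⁻¹)
  have he : ((z₁^2)⁻¹ * ((1 - z₂/z₁)^2)⁻¹) = ((z₁-z₂)^2)⁻¹ := by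
    rw [← mul_inv, ← mul_pow]
    congr 2
    field_simp
  rw [he] at h
  suffices hfun : (fun k : ℕ => ((k:ℂ)+1) * z₂^k * z₁^(-(k:ℤ)-2)) = (fun i : ℕ => (z₁ ^ 2)⁻¹ * (((i:ℂ) + 1) * (z₂ / z₁) ^ i)) by
    rw [hfun]; exact h
  funext k
  have e2 : z₁^(-(k:ℤ)-2) = (z₁^(k:ℕ))⁻¹ * (z₁^(2:ℕ))⁻¹ := by
    rw [zpow_sub₀ hz₁, zpow_neg, zpow_natCast, div_eq_mul_inv]
    norm_num
  rw [e2, div_pow, div_eq_mul_inv]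
  ring


lemma sumAux {r : ℝ} (h0 : 0 ≤ r) (h1 : r < 1) :
    Summable (fun k : ℕ => ((k:ℝ)+1) * r^k) := by
  have ha : HasSum (fun k : ℕ => (k:ℝ) * r^k) (r / (1-r)^2) :=
    hasSum_coe_mul_geometric_of_norm_lt_one (by rwa [Real.norm_eq_abs, _root_.abs_of_nonneg h0])
  have hb : HasSum (fun k : ℕ => r^k) (1-r)⁻¹ := hasSum_geometric_of_lt_one h0 h1
  exact ((ha.add hb).summable).congr fun k => by ring

/-- reindexing `ℕ×ℕ` sums along antidiagonals -/
lemma diagSum (F : ℕ → ℂ) (hs : Summable fun p : ℕ×ℕ => F (p.1 + p.2)) :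
    ∑' p : ℕ×ℕ, F (p.1 + p.2) = ∑' s : ℕ, ((s:ℂ)+1) * F s := by
  let E : (Σ s : ℕ, Fin (s+1)) ≃ ℕ×ℕ :=
    { toFun := fun q => (q.2.1, q.1 - q.2.1)
      invFun := fun p => ⟨p.1 + p.2, ⟨p.1, by omega⟩⟩
      left_inv := by
        rintro ⟨s, i⟩
        have hi : i.1 ≤ s := by omega
        refine Sigma.ext (by dsimp only; omega) ?_
        rw [Fin.heq_ext_iff (by dsimp only; omega)]
      right_inv := by
        rintro ⟨a, b⟩
        simp }
  have hE : ∀ q : Σ s : ℕ, Fin (s+1), F ((E q).1 + (E q).2) = F q.1 := by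
    rintro ⟨s, i⟩
    have hi : i.1 ≤ s := by omega
    simp only [E, Equiv.coe_fn_mk]
    congr 1
    omega
  have hsig : Summable (fun q : Σ s : ℕ, Fin (s+1) => F ((E q).1 + (E q).2)) :=
    E.summable_iff.mpr hs
  calc ∑' p : ℕ×ℕ, F (p.1 + p.2)
      = ∑' q : Σ s : ℕ, Fin (s+1), F ((E q).1 + (E q).2) := (E.tsum_eq _).symm
    _ = ∑' q : Σ s : ℕ, Fin (s+1), F q.1 := tsum_congr hE
    _ = ∑' (s : ℕ), ∑' (i : Fin (s+1)), F s := Summable.tsum_sigma (hsig.congr hE)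
    _ = ∑' s : ℕ, ((s:ℂ)+1) * F s := by
        refine tsum_congr fun s => ?_
        rw [tsum_fintype]
        simp [Finset.sum_const, Finset.card_univ, nsmul_eq_mul]


lemma absCirc {R : ℝ} (hR : 0 < R) (θ : ℝ) : ‖(R:ℂ) * Complex.exp (I*θ)‖ = R := by
  rw [norm_mul, Complex.norm_exp]
  simp [abs_of_pos hR]

lemma neCirc {R : ℝ} (hR : 0 < R) (θ : ℝ) : ((R:ℂ) * Complex.exp (I*θ)) ≠ 0 := by
  intro hzero
  have := absCirc hR θ
  rw [hzero] at this
  simp at this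
  linarith

lemma contCirc {R : ℝ} (hR : 0 < R) (n : ℤ) :
    Continuous (fun θ : ℝ => ((R:ℂ) * Complex.exp (I*θ)) ^ n) := by
  apply Continuous.zpow₀
  · exact continuous_const.mul (Complex.continuous_exp.comp (continuous_const.mul Complex.continuous_ofReal))
  · exact fun θ => Or.inl (neCirc hR θ)

lemma expand_int (c : ℤ → ℂ) (d : ℕ → ℂ) (e : ℕ → ℤ) (t : ℤ) (R : ℝ) (hR : 0 < R)
    (hcs : Summable fun m : ℤ => ‖c m‖ * R ^ m)
    (hds : Summable fun k : ℕ => ‖d k‖ * R ^ (e k)) :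
    (∫ θ in (0:ℝ)..(2*Real.pi),
      (∑' m : ℤ, c m * ((R:ℂ) * Complex.exp (I*θ)) ^ m) *
      (∑' k : ℕ, d k * ((R:ℂ) * Complex.exp (I*θ)) ^ (e k)) *
      ((R:ℂ) * Complex.exp (I*θ)) ^ t * (I * ((R:ℂ) * Complex.exp (I*θ))))
    = (2*Real.pi*I) * ∑' k : ℕ, c (-1 - t - e k) * d k := by
  have hRc : (R:ℂ) ≠ 0 := by exact_mod_cast hR.ne'
  set z : ℝ → ℂ := fun θ => (R:ℂ) * Complex.exp (I*θ) with hzdef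
  set F : ℤ×ℕ → ℝ → ℂ := fun p θ =>
    (c p.1 * d p.2) * ((z θ) ^ (p.1 + e p.2 + t) * (I * z θ)) with hFdef
  have hnz : ∀ (θ : ℝ) (n : ℤ), ‖(z θ) ^ n‖ = R ^ n := by
    intro θ n
    rw [norm_zpow, absCirc hR]
  -- Step A: pointwise expansion
  have hpt : ∀ θ : ℝ,
      (∑' m : ℤ, c m * (z θ) ^ m) * (∑' k : ℕ, d k * (z θ) ^ (e k)) * (z θ) ^ t * (I * z θ)
      = ∑' p : ℤ×ℕ, F p θ := by
    intro θ
    have hc' : Summable fun m : ℤ => ‖c m * (z θ) ^ m‖ := by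
      refine hcs.congr fun m => ?_
      rw [norm_mul, hnz]
    have hd' : Summable fun k : ℕ => ‖d k * (z θ) ^ (e k)‖ := by
      refine hds.congr fun k => ?_
      rw [norm_mul, hnz]
    rw [tsum_mul_tsum_of_summable_norm hc' hd', ← tsum_mul_right, ← tsum_mul_right]
    refine tsum_congr fun p => ?_
    simp only [hFdef]
    rw [zpow_add₀ (neCirc hR θ), zpow_add₀ (neCirc hR θ)]
    ring
  -- Step B: integrability and summability of integrals of norms
  have hFcont : ∀ p : ℤ×ℕ, Continuous (F p) := by
    intro p
    exact continuous_const.mul ((contCirc hR _).mul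
      (continuous_const.mul (contCirc hR 1 |>.congr (fun θ => by simp [z]))))
  have hFnorm : ∀ (p : ℤ×ℕ) (θ : ℝ), ‖F p θ‖ = ‖c p.1‖ * ‖d p.2‖ * R ^ (p.1 + e p.2 + t + 1) := by
    intro p θ
    have hzθ : ‖z θ‖ = R := by exact absCirc hR θ
    simp only [hFdef]
    rw [norm_mul, norm_mul, norm_mul, norm_mul, hnz, hzθ, Complex.norm_I]
    simp only [zpow_add₀ hR.ne', zpow_one]
    ring
  have hconstint : ∀ p : ℤ×ℕ, ∫ θ in Set.Ioc (0:ℝ) (2*Real.pi), ‖F p θ‖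
      = (2*Real.pi) * (‖c p.1‖ * ‖d p.2‖ * R ^ (p.1 + e p.2 + t + 1)) := by
    intro p
    rw [setIntegral_congr_fun measurableSet_Ioc (fun θ _ => hFnorm p θ), setIntegral_const]
    rw [Real.volume_real_Ioc_of_le (by positivity), sub_zero, smul_eq_mul]
  have hFsumnorm : Summable fun p : ℤ×ℕ => ∫ θ in Set.Ioc (0:ℝ) (2*Real.pi), ‖F p θ‖ := by
    rw [summable_congr hconstint]
    have h1 : Summable fun p : ℤ×ℕ => (‖c p.1‖ * R ^ p.1) * (‖d p.2‖ * R ^ (e p.2)) :=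
      hcs.mul_of_nonneg hds (fun m => by positivity) (fun k => by positivity)
    refine ((h1.mul_left ((2*Real.pi) * R ^ (t+1))).congr fun p => ?_)
    simp only [zpow_add₀ hR.ne', zpow_one]
    ring
  have hFint : ∀ p : ℤ×ℕ, IntegrableOn (F p) (Set.Ioc (0:ℝ) (2*Real.pi)) volume :=
    fun p => (hFcont p).integrableOn_Ioc
  -- Step C: swap integral and sum
  have h2pi : (0:ℝ) ≤ 2*Real.pi := by positivity
  have hswap : (∫ θ in (0:ℝ)..(2*Real.pi), ∑' p : ℤ×ℕ, F p θ)
      = ∑' p : ℤ×ℕ, ∫ θ in (0:ℝ)..(2*Real.pi), F p θ := by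
    rw [intervalIntegral.integral_of_le h2pi]
    simp_rw [intervalIntegral.integral_of_le h2pi]
    exact (integral_tsum_of_summable_integral_norm hFint hFsumnorm).symm
  rw [intervalIntegral.integral_congr (fun θ _ => hpt θ), hswap]
  -- Step D: evaluate each integral
  have hInt : ∀ p : ℤ×ℕ, (∫ θ in (0:ℝ)..(2*Real.pi), F p θ)
      = if p.1 = -1 - t - e p.2 then (c p.1 * d p.2) * (2*Real.pi*I) else 0 := by
    intro p
    simp only [hFdef]
    rw [intervalIntegral.integral_const_mul, circInt R hR]
    by_cases hmk : p.1 = -1 - t - e p.2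
    · rw [if_pos (by omega), if_pos hmk]
    · rw [if_neg (by omega), if_neg hmk, mul_zero]
  -- summability of the integrals
  have hS : Summable fun p : ℤ×ℕ => ∫ θ in (0:ℝ)..(2*Real.pi), F p θ := by
    simp_rw [intervalIntegral.integral_of_le h2pi]
    exact Summable.of_norm_bounded hFsumnorm
      (fun p => norm_integral_le_integral_norm _)
  rw [tsum_congr hInt]
  have hS' : Summable fun p : ℤ×ℕ =>
      if p.1 = -1 - t - e p.2 then (c p.1 * d p.2) * (2*Real.pi*I) else 0 :=
    hS.congr hInt
  rw [Summable.tsum_prod hS']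
  rw [← Summable.tsum_comm (by exact hS')]
  rw [show (∑' (k:ℕ) (m:ℤ), if m = -1 - t - e k then (c m * d k) * (2*Real.pi*I) else 0)
      = ∑' k : ℕ, (c (-1 - t - e k) * d k) * (2*Real.pi*I) from
    tsum_congr fun k => tsum_eq_single (-1 - t - e k) (fun m hm => if_neg hm) |>.trans (if_pos rfl)]
  rw [tsum_mul_right]
  ring


/-- Trace formula by contour integrals: with `f, g` given by absolutely
convergent Laurent series on `|z| = R₁`, `|z| = R₂` (`R₂ < R₁`), the trace of
the operator on `ℓ²({h, h+1, …})` with entries `A(i,j) = ∑_{k≥1} f_{i+k} g_{-k-j}`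
equals `-(1/4π²) ∮∮ f(z₁) g(z₂) z₁^{-h} z₂^{h} / (z₁ - z₂)² dz₁ dz₂`. -/
theorem stmt_11 (f g : ℂ → ℂ) (fc gc : ℤ → ℂ) (R₁ R₂ : ℝ)
    (hR₂ : 0 < R₂) (hR : R₂ < R₁)
    (hfs : Summable fun m : ℤ => ‖fc m‖ * R₁ ^ m)
    (hgs : Summable fun m : ℤ => ‖gc m‖ * R₂ ^ m)
    (hf : ∀ z : ℂ, ‖z‖ = R₁ → f z = ∑' m : ℤ, fc m * z ^ m)
    (hg : ∀ z : ℂ, ‖z‖ = R₂ → g z = ∑' m : ℤ, gc m * z ^ m)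
    (h : ℤ)
    (A : ℤ → ℤ → ℂ)
    (hA : ∀ i j : ℤ, A i j = ∑' k : ℕ, fc (i + (k + 1)) * gc (-(k + 1) - j))
    (htr : Summable fun p : ℕ × ℕ =>
      ‖fc ((h + p.1) + (p.2 + 1))‖ * ‖gc (-(p.2 + 1) - (h + p.1))‖) :
    ∑' i : ℕ, A (h + i) (h + i) =
      -(4 * (Real.pi : ℂ) ^ 2)⁻¹ *
        ∫ θ₁ in (0 : ℝ)..(2 * Real.pi), ∫ θ₂ in (0 : ℝ)..(2 * Real.pi),
          (f ((R₁ : ℂ) * Complex.exp (I * θ₁)) * g ((R₂ : ℂ) * Complex.exp (I * θ₂)) *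
              ((R₁ : ℂ) * Complex.exp (I * θ₁)) ^ (-h) *
              ((R₂ : ℂ) * Complex.exp (I * θ₂)) ^ h /
              ((R₁ : ℂ) * Complex.exp (I * θ₁) - (R₂ : ℂ) * Complex.exp (I * θ₂)) ^ 2) *
            (I * ((R₁ : ℂ) * Complex.exp (I * θ₁))) * (I * ((R₂ : ℂ) * Complex.exp (I * θ₂))) := by
  have hR₁ : 0 < R₁ := hR₂.trans hR
  set z1 : ℝ → ℂ := fun θ => (R₁:ℂ) * Complex.exp (I*θ) with hz1def
  set z2 : ℝ → ℂ := fun θ => (R₂:ℂ) * Complex.exp (I*θ) with hz2def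
  -- ### inner integral
  have hinner : ∀ θ₁ : ℝ,
      (∫ θ₂ in (0:ℝ)..(2*Real.pi),
        (f (z1 θ₁) * g (z2 θ₂) * (z1 θ₁)^(-h) * (z2 θ₂)^h / (z1 θ₁ - z2 θ₂)^2) *
          (I * z1 θ₁) * (I * z2 θ₂))
      = f (z1 θ₁) * (z1 θ₁)^(-h) * (I * z1 θ₁) *
          ((2*Real.pi*I) * ∑' k : ℕ, gc (-1 - h - k) * (((k:ℂ)+1) * (z1 θ₁)^(-(k:ℤ)-2))) := by
    intro θ₁
    have habs1 : ‖z1 θ₁‖ = R₁ := absCirc hR₁ θ₁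
    have hne1 : z1 θ₁ ≠ 0 := neCirc hR₁ θ₁
    have hz1n : ∀ n : ℤ, ‖(z1 θ₁) ^ n‖ = R₁ ^ n := fun n => by
      rw [norm_zpow, habs1]
    have hpt : ∀ θ₂ : ℝ,
        (f (z1 θ₁) * g (z2 θ₂) * (z1 θ₁)^(-h) * (z2 θ₂)^h / (z1 θ₁ - z2 θ₂)^2) *
          (I * z1 θ₁) * (I * z2 θ₂)
        = (f (z1 θ₁) * (z1 θ₁)^(-h) * (I * z1 θ₁)) *
          ((∑' m : ℤ, gc m * (z2 θ₂)^m) *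
           (∑' k : ℕ, (((k:ℂ)+1) * (z1 θ₁)^(-(k:ℤ)-2)) * (z2 θ₂)^((k:ℤ))) *
           (z2 θ₂)^h * (I * z2 θ₂)) := by
      intro θ₂
      have habs2 : ‖z2 θ₂‖ = R₂ := absCirc hR₂ θ₂
      have hgsum : HasSum (fun k : ℕ => (((k:ℂ)+1) * (z1 θ₁)^(-(k:ℤ)-2)) * (z2 θ₂)^((k:ℤ)))
          (((z1 θ₁ - z2 θ₂)^2)⁻¹) := by
        have hbase := geomTwo (z₂ := z2 θ₂) hne1 (by rw [habs1, habs2]; exact hR)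
        have hfun : (fun k : ℕ => ((k:ℂ)+1) * (z2 θ₂)^k * (z1 θ₁)^(-(k:ℤ)-2))
            = (fun k : ℕ => (((k:ℂ)+1) * (z1 θ₁)^(-(k:ℤ)-2)) * (z2 θ₂)^((k:ℤ))) :=
          funext fun k => by rw [zpow_natCast]; ring
        exact hfun ▸ hbase
      rw [← hg _ habs2, hgsum.tsum_eq, div_eq_mul_inv]
      ring
    rw [intervalIntegral.integral_congr (fun θ₂ _ => hpt θ₂),
      intervalIntegral.integral_const_mul]
    congr 1
    have hds : Summable fun k : ℕ => ‖((k:ℂ)+1) * (z1 θ₁)^(-(k:ℤ)-2)‖ * R₂ ^ ((k:ℤ)) := by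
      have base : Summable (fun k : ℕ => ((k:ℝ)+1) * (R₂/R₁)^k) :=
        sumAux (by positivity) ((div_lt_one hR₁).mpr hR)
      refine (base.mul_left (R₁^(-2:ℤ))).congr fun k => ?_
      have e1 : R₁^(-(k:ℤ)-2) = (R₁^(k:ℕ))⁻¹ * R₁^(-2:ℤ) := by
        rw [← zpow_natCast R₁ k, ← zpow_neg, ← zpow_add₀ hR₁.ne']
        congr 1
      have e2 : ‖((k:ℂ)+1) * (z1 θ₁)^(-(k:ℤ)-2)‖ = ((k:ℝ)+1) * R₁^(-(k:ℤ)-2) := by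
        rw [norm_mul, hz1n]
        congr 1
        rw [show ((k:ℂ)+1) = ((k+1:ℕ):ℂ) by push_cast; ring, Complex.norm_natCast]
        push_cast
        ring
      rw [e2, e1, zpow_natCast R₂ k, div_pow, div_eq_mul_inv]
      ring
    exact expand_int gc (fun k => ((k:ℂ)+1) * (z1 θ₁)^(-(k:ℤ)-2)) (fun k => (k:ℤ)) h R₂ hR₂ hgs hds
  -- ### summability for the outer expansion
  have hds2 : Summable fun k : ℕ => ‖((k:ℂ)+1) * gc (-1 - h - k)‖ * R₁ ^ (-(k:ℤ)-2) := by
    set M := ∑' m : ℤ, ‖gc m‖ * R₂ ^ m with hM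
    have hMle : ∀ m : ℤ, ‖gc m‖ * R₂^m ≤ M := fun m => hgs.le_tsum m (fun b _ => by positivity)
    have base : Summable (fun k : ℕ => ((k:ℝ)+1) * (R₂/R₁)^k) :=
      sumAux (by positivity) ((div_lt_one hR₁).mpr hR)
    refine Summable.of_nonneg_of_le (fun k => by positivity) (fun k => ?_)
      (base.mul_left (M * R₂^((1+h:ℤ)) * R₁^(-2:ℤ)))
    have hgb : ‖gc (-1 - h - k)‖ ≤ M / R₂^((-1-h-(k:ℤ))) :=
      (le_div_iff₀ (by positivity)).mpr (hMle _)
    have eA : (R₂:ℝ)^(-((-1-h-(k:ℤ)))) = R₂^((1+h:ℤ)) * R₂^(k:ℕ) := by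
      rw [← zpow_natCast R₂ k, ← zpow_add₀ hR₂.ne']
      congr 1 <;> ring
    have eB : R₁^(-(k:ℤ)-2) = (R₁^(k:ℕ))⁻¹ * R₁^(-2:ℤ) := by
      rw [← zpow_natCast R₁ k, ← zpow_neg, ← zpow_add₀ hR₁.ne']
      congr 1
    have eN : ‖((k:ℂ)+1) * gc (-1 - h - k)‖ = ((k:ℝ)+1) * ‖gc (-1 - h - k)‖ := by
      rw [norm_mul]
      congr 1
      rw [show ((k:ℂ)+1) = ((k+1:ℕ):ℂ) by push_cast; ring, Complex.norm_natCast]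
      push_cast
      ring
    calc ‖((k:ℂ)+1) * gc (-1 - h - k)‖ * R₁ ^ (-(k:ℤ)-2)
        = (((k:ℝ)+1) * R₁ ^ (-(k:ℤ)-2)) * ‖gc (-1 - h - k)‖ := by rw [eN]; ring
      _ ≤ (((k:ℝ)+1) * R₁ ^ (-(k:ℤ)-2)) * (M / R₂^((-1-h-(k:ℤ)))) := by
          refine mul_le_mul_of_nonneg_left hgb (by positivity)
      _ = M * R₂^((1+h:ℤ)) * R₁^(-2:ℤ) * (((k:ℝ)+1) * (R₂/R₁)^k) := by
          rw [div_eq_mul_inv, ← zpow_neg, eA, eB, div_pow, div_eq_mul_inv]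
          ring
  -- ### outer integral
  have houter : (∫ θ₁ in (0:ℝ)..(2*Real.pi),
        f (z1 θ₁) * (z1 θ₁)^(-h) * (I * z1 θ₁) *
          ((2*Real.pi*I) * ∑' k : ℕ, gc (-1 - h - k) * (((k:ℂ)+1) * (z1 θ₁)^(-(k:ℤ)-2))))
      = (2*Real.pi*I) * ((2*Real.pi*I) *
          ∑' k : ℕ, fc (-1 - (-h) - (-(k:ℤ)-2)) * (((k:ℂ)+1) * gc (-1 - h - k))) := by
    have hpt2 : ∀ θ₁ : ℝ,
        f (z1 θ₁) * (z1 θ₁)^(-h) * (I * z1 θ₁) *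
          ((2*Real.pi*I) * ∑' k : ℕ, gc (-1 - h - k) * (((k:ℂ)+1) * (z1 θ₁)^(-(k:ℤ)-2)))
        = (2*Real.pi*I) * ((∑' m : ℤ, fc m * (z1 θ₁)^m) *
            (∑' k : ℕ, (((k:ℂ)+1) * gc (-1 - h - k)) * (z1 θ₁)^(-(k:ℤ)-2)) *
            (z1 θ₁)^(-h) * (I * z1 θ₁)) := by
      intro θ₁
      rw [hf _ (absCirc hR₁ θ₁),
        show (∑' k : ℕ, gc (-1 - h - k) * (((k:ℂ)+1) * (z1 θ₁)^(-(k:ℤ)-2)))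
          = ∑' k : ℕ, (((k:ℂ)+1) * gc (-1 - h - k)) * (z1 θ₁)^(-(k:ℤ)-2) from
          tsum_congr fun k => by ring]
      ring
    rw [intervalIntegral.integral_congr (fun θ₁ _ => hpt2 θ₁),
      intervalIntegral.integral_const_mul]
    congr 1
    exact expand_int fc (fun k => ((k:ℂ)+1) * gc (-1 - h - k)) (fun k => -(k:ℤ)-2) (-h) R₁ hR₁
      hfs hds2
  rw [intervalIntegral.integral_congr (fun θ₁ _ => hinner θ₁), houter]
  -- ### the left-hand side
  have hsum : Summable (fun p : ℕ×ℕ =>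
      fc ((h + p.1) + ((p.2:ℤ) + 1)) * gc (-((p.2:ℤ)+1) - (h + p.1))) := by
    refine Summable.of_norm ?_
    exact htr.congr fun p => (norm_mul _ _).symm
  have hL : (∑' i : ℕ, A (h + i) (h + i))
      = ∑' p : ℕ×ℕ, fc ((h + p.1) + ((p.2:ℤ)+1)) * gc (-((p.2:ℤ)+1) - (h + p.1)) := by
    simp_rw [hA]
    exact (Summable.tsum_prod hsum).symm
  set F : ℕ → ℂ := fun s => fc (h + s + 1) * gc (-1 - h - s) with hF
  have hFp : ∀ p : ℕ×ℕ,
      fc ((h + p.1) + ((p.2:ℤ)+1)) * gc (-((p.2:ℤ)+1) - (h + p.1)) = F (p.1 + p.2) := by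
    rintro ⟨a, b⟩
    simp only [hF]
    congr 1 <;> · congr 1; push_cast; ring
  rw [hL, tsum_congr hFp, diagSum F (hsum.congr hFp)]
  have hfix : (∑' k : ℕ, fc (-1 - (-h) - (-(k:ℤ)-2)) * (((k:ℂ)+1) * gc (-1 - h - k)))
      = ∑' s : ℕ, ((s:ℂ)+1) * F s := by
    refine tsum_congr fun k => ?_
    simp only [hF]
    rw [show (-1 - (-h) - (-(k:ℤ)-2)) = h + k + 1 by ring]
    ring
  rw [hfix]
  -- ### final scalar arithmetic
  have hπ : ((Real.pi:ℂ)) ≠ 0 := Complex.ofReal_ne_zero.mpr Real.pi_ne_zero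
  set S := ∑' s : ℕ, ((s:ℂ)+1) * F s with hS
  rw [show ((2*(Real.pi:ℂ)*I) * ((2*(Real.pi:ℂ)*I) * S)) = -(4*(Real.pi:ℂ)^2) * S from by
    linear_combination (4*(Real.pi:ℂ)^2*S) * Complex.I_sq]
  rw [show (-(4*(Real.pi:ℂ)^2)⁻¹ * (-(4*(Real.pi:ℂ)^2) * S))
      = ((4*(Real.pi:ℂ)^2)⁻¹ * (4*(Real.pi:ℂ)^2)) * S from by ring,
    inv_mul_cancel₀ (by simp [hπ] : (4*(Real.pi:ℂ)^2) ≠ 0), one_mul]
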